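/- Let (X,d) be a metric space with |X| ≥ 3, T : X → X a generalized Kannan type mapping with λ ∈ [0, 2/3) satisfying T(T(x)) ≠ x whenever Tx ≠ x, and let x₀ ∈ X with iterates xₙ₊₁ = Txₙ. If no xₙ is a fixed point of T, then for all n ≥ 1, the points xₙ₋₁, xₙ, xₙ₊₁ are pairwise distinct and d(xₙ₊₁, xₙ₊₂) ≤ (2λ/(2−λ)) · max{d(xₙ₋₁, xₙ), d(xₙ, xₙ₊₁)}. -/
import Mathlib


theorem stmt_5 {X : Type*} [MetricSpace X] (h3 : 3 ≤ Cardinal.mk X) (T : X → X)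
    (l : ℝ) (hl0 : 0 ≤ l) (hl : l < 2/3)
    (hGK : ∀ x y z : X, x ≠ y → y ≠ z → x ≠ z →
      dist (T x) (T y) + dist (T y) (T z) + dist (T x) (T z) ≤
        l * (dist x (T x) + dist y (T y) + dist z (T z)))
    (hi : ∀ x : X, T x ≠ x → T (T x) ≠ x)
    (x : ℕ → X) (hiter : ∀ n, x (n + 1) = T (x n))
    (hnf : ∀ n, T (x n) ≠ x n) :
    ∀ n : ℕ,
      (x n ≠ x (n+1) ∧ x (n+1) ≠ x (n+2) ∧ x n ≠ x (n+2)) ∧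
      dist (x (n+2)) (x (n+3)) ≤
        (2*l/(2-l)) * max (dist (x n) (x (n+1))) (dist (x (n+1)) (x (n+2))) := by
  intro n
  have h1 : ∀ m, x m ≠ x (m+1) := fun m => by rw [hiter]; exact (hnf m).symm
  have h2 : ∀ m, x m ≠ x (m+2) := fun m => by
    rw [show m+2 = m+1+1 from rfl, hiter, hiter]; exact (hi (x m) (hnf m)).symm
  refine ⟨⟨h1 n, h1 (n+1), h2 n⟩, ?_⟩
  have key := hGK (x n) (x (n+1)) (x (n+2)) (h1 n) (h1 (n+1)) (h2 n)
  rw [← hiter n, ← hiter (n+1), ← hiter (n+2)] at key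
  have tri : dist (x (n+2)) (x (n+3)) ≤ dist (x (n+1)) (x (n+2)) + dist (x (n+1)) (x (n+3)) := by
    rw [dist_comm (x (n+1)) (x (n+2))]; exact dist_triangle _ _ _
  have ha : dist (x n) (x (n+1)) ≤ max (dist (x n) (x (n+1))) (dist (x (n+1)) (x (n+2))) :=
    le_max_left _ _
  have hb : dist (x (n+1)) (x (n+2)) ≤ max (dist (x n) (x (n+1))) (dist (x (n+1)) (x (n+2))) :=
    le_max_right _ _
  have hpos : (0:ℝ) < 2 - l := by linarith
  rw [div_mul_eq_mul_div, le_div_iff₀ hpos]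
  nlinarith [dist_nonneg (x := x (n+2)) (y := x (n+3)), dist_nonneg (x := x (n+1)) (y := x (n+3))]
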